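/- Let n ≥ 1, m ≥ 0, let V = Fin (m+1) → Matrix (Fin n) (Fin n) ℂ be the space of coefficient tuples of matrix polynomials of degree ≤ m (each L ∈ V defining the matrix polynomial L(λ) = Σ_{k=0}^{m} L_k λ^k), and let 𝓛 ⊆ V be a locally compact subset. Let φ : ℝ × 𝓛 → 𝓛 be a continuous flow on 𝓛 and A : 𝓛 → ℂ → Matrix (Fin n) (Fin n) ℂ a map such that for every L ∈ 𝓛 and λ ∈ ℂ, t ↦ (φ(t, L))(λ) is differentiable with derivative [(φ(t, L))(λ), A(φ(t, L))(λ)]. If L⁰ ∈ 𝓛 is an isolated point of the isospectral variety S(L⁰) = {L ∈ 𝓛 : det(L(λ) − μ·1) = det(L⁰(λ) − μ·1) for all λ, μ ∈ ℂ}, then φ(t, L⁰) = L⁰ for all t ∈ ℝ, and L⁰ is Lyapunov stable: for every neighborhood U of L⁰ in 𝓛 there is a neighborhood V of L⁰ in 𝓛 with φ(t, L) ∈ U for all L ∈ V and all t ∈ ℝ. -/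

import Mathlib

/-- Evaluation of a tuple of coefficients as a matrix polynomial of degree `≤ m`:
`L(λ) = Σ_{k=0}^{m} L_k λ^k`. -/
noncomputable def matPolyEval {n m : ℕ} (L : Fin (m + 1) → Matrix (Fin n) (Fin n) ℂ)
    (lam : ℂ) : Matrix (Fin n) (Fin n) ℂ :=
  ∑ k : Fin (m + 1), lam ^ (k : ℕ) • L k

section Aux

open Matrix Finset

variable {n : ℕ}

/-- Liouville-type identity: the derivative of the determinant along a Lax-type
direction vanishes: `∑ i det(updateRow M i ((MB - BM) i)) = 0`. -/
lemma sum_det_updateRow_comm (M B : Matrix (Fin n) (Fin n) ℂ) :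
    ∑ i, (M.updateRow i ((M * B - B * M) i)).det = 0 := by
  have hrow : ∀ (C D : Matrix (Fin n) (Fin n) ℂ) (i : Fin n),
      (C * D) i = ∑ k, C i k • D k := by
    intro C D i; funext j; simp [Matrix.mul_apply, Finset.sum_apply]
  have h1 : ∀ i : Fin n, (M.updateRow i ((M * B - B * M) i)).det
      = cramer Mᵀ ((M * B) i) i - cramer Mᵀ ((B * M) i) i := by
    intro i
    rw [← Matrix.cramer_transpose_apply]
    have h : (M * B - B * M) i = (M * B) i - (B * M) i := rfl
    rw [h, map_sub]
    rfl
  have h2 : ∀ i, cramer Mᵀ ((B * M) i) i = B i i * M.det := by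
    intro i
    rw [hrow, map_sum]
    simp only [_root_.map_smul, Matrix.cramer_transpose_row_self]
    simp [Pi.single_apply]
  have h3 : ∀ i, cramer Mᵀ ((M * B) i) i = ∑ k, M i k * cramer Mᵀ (B k) i := by
    intro i
    rw [hrow, map_sum]
    simp [Finset.sum_apply]
  have h4 : ∀ k : Fin n, ∑ i, M i k * cramer Mᵀ (B k) i = M.det * B k k := by
    intro k
    have h := congrFun (Matrix.mulVec_cramer Mᵀ (B k)) k
    simp only [Matrix.mulVec, dotProduct, Matrix.transpose_apply, Matrix.det_transpose,
      Pi.smul_apply, smul_eq_mul] at h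
    exact h
  simp only [h1, h2, h3, Finset.sum_sub_distrib,
    Finset.sum_comm (f := fun i k => M i k * cramer Mᵀ (B k) i)]
  simp only [h4]
  rw [sub_eq_zero]
  exact Finset.sum_congr rfl fun k _ => mul_comm _ _

/-- Derivative of the determinant along an entrywise differentiable matrix path. -/
lemma hasDerivAt_det_path {g : ℝ → Matrix (Fin n) (Fin n) ℂ}
    {g' : Matrix (Fin n) (Fin n) ℂ} {t : ℝ}
    (h : ∀ i j, HasDerivAt (fun s => g s i j) (g' i j) t) :
    HasDerivAt (fun s => (g s).det) (∑ i, ((g t).updateRow i (g' i)).det) t := by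
  have hprod : ∀ σ : Equiv.Perm (Fin n),
      HasDerivAt (fun s => ∏ i, g s (σ i) i)
        (∑ i, (∏ j ∈ univ.erase i, g t (σ j) j) • g' (σ i) i) t :=
    fun σ => HasDerivAt.fun_finsetProd (fun i _ => h (σ i) i)
  have hsum := HasDerivAt.fun_sum (u := univ)
    (fun σ _ => ((hprod σ).const_mul ((Equiv.Perm.sign σ : ℤ) : ℂ)))
  have hfun : (fun s => (g s).det)
      = fun s => ∑ σ : Equiv.Perm (Fin n), ((Equiv.Perm.sign σ : ℤ) : ℂ) * ∏ i, g s (σ i) i := by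
    funext s; rw [Matrix.det_apply']
  rw [hfun]
  convert hsum using 1
  · rfl
  have key : ∀ (σ : Equiv.Perm (Fin n)) (i : Fin n),
      (∏ j ∈ univ.erase i, g t (σ j) j) • g' (σ i) i
        = ∏ j, ((g t).updateRow (σ i) (g' (σ i))) (σ j) j := by
    intro σ i
    rw [← Finset.mul_prod_erase univ _ (mem_univ i), Matrix.updateRow_self, smul_eq_mul,
      mul_comm]
    congr 1
    exact Finset.prod_congr rfl fun j hj =>
      (congrFun (Matrix.updateRow_ne
        (fun hc => (Finset.mem_erase.1 hj).1 (σ.injective hc))) j).symm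
  calc ∑ i, ((g t).updateRow i (g' i)).det
      = ∑ i, ∑ σ : Equiv.Perm (Fin n), ((Equiv.Perm.sign σ : ℤ) : ℂ)
          * ∏ j, ((g t).updateRow i (g' i)) (σ j) j := by
        simp only [Matrix.det_apply']
    _ = ∑ σ : Equiv.Perm (Fin n), ∑ i, ((Equiv.Perm.sign σ : ℤ) : ℂ)
          * ∏ j, ((g t).updateRow i (g' i)) (σ j) j := Finset.sum_comm
    _ = ∑ σ : Equiv.Perm (Fin n), ((Equiv.Perm.sign σ : ℤ) : ℂ)
          * ∑ i, (∏ j ∈ univ.erase i, g t (σ j) j) • g' (σ i) i := by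
        refine Finset.sum_congr rfl fun σ _ => ?_
        rw [Finset.mul_sum]
        rw [← Equiv.sum_comp σ (fun r => ((Equiv.Perm.sign σ : ℤ) : ℂ)
          * ∏ j, ((g t).updateRow r (g' r)) (σ j) j)]
        exact Finset.sum_congr rfl fun i _ => by rw [key σ i]

end Aux

/-- If `L⁰` is an isolated point of its isospectral variety inside the
phase space `𝓛` of a flow admitting a Lax representation with spectral parameter, then
`L⁰` is a fixed point of the flow and is Lyapunov stable. -/
theorem statement2 (n : ℕ) (hn : 1 ≤ n) (m : ℕ)
    (S : Set (Fin (m + 1) → Matrix (Fin n) (Fin n) ℂ))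
    [LocallyCompactSpace S]
    (φ : ℝ × S → S) (hφ : Continuous φ)
    (hzero : ∀ x : S, φ (0, x) = x)
    (hadd : ∀ (s t : ℝ) (x : S), φ (s, φ (t, x)) = φ (s + t, x))
    (A : S → ℂ → Matrix (Fin n) (Fin n) ℂ)
    (hLax : ∀ (x : S) (lam : ℂ) (t : ℝ) (i j : Fin n),
      HasDerivAt (fun s : ℝ => matPolyEval (φ (s, x)).1 lam i j)
        ((matPolyEval (φ (t, x)).1 lam * A (φ (t, x)) lam
          - A (φ (t, x)) lam * matPolyEval (φ (t, x)).1 lam) i j) t)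
    (L₀ : S)
    (hiso : ∃ U ∈ nhds L₀, {x : S | x ∈ U ∧ ∀ lam μ : ℂ,
        (matPolyEval x.1 lam - μ • 1).det = (matPolyEval L₀.1 lam - μ • 1).det} = {L₀}) :
    (∀ t : ℝ, φ (t, L₀) = L₀) ∧
      ∀ U ∈ nhds L₀, ∃ V ∈ nhds L₀, ∀ x ∈ V, ∀ t : ℝ, φ (t, x) ∈ U := by
  classical
  obtain ⟨U₀, hU₀, hU₀eq⟩ := hiso
  -- Conservation of the spectral invariants along the flow.
  have hFinv : ∀ (x : S) (t : ℝ) (lam μ : ℂ),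
      (matPolyEval (φ (t, x)).1 lam - μ • 1).det = (matPolyEval x.1 lam - μ • 1).det := by
    intro x t lam μ
    have hder : ∀ s : ℝ, HasDerivAt
        (fun u : ℝ => (matPolyEval (φ (u, x)).1 lam - μ • 1).det) 0 s := by
      intro s
      have hentry : ∀ i j, HasDerivAt
          (fun u : ℝ => (matPolyEval (φ (u, x)).1 lam - μ • 1) i j)
          (((matPolyEval (φ (s, x)).1 lam - μ • 1) * A (φ (s, x)) lam
            - A (φ (s, x)) lam * (matPolyEval (φ (s, x)).1 lam - μ • 1)) i j) s := by
        intro i j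
        have h2 : (matPolyEval (φ (s, x)).1 lam - μ • 1) * A (φ (s, x)) lam
            - A (φ (s, x)) lam * (matPolyEval (φ (s, x)).1 lam - μ • 1)
            = matPolyEval (φ (s, x)).1 lam * A (φ (s, x)) lam
              - A (φ (s, x)) lam * matPolyEval (φ (s, x)).1 lam := by
          simp only [Matrix.sub_mul, Matrix.mul_sub, Matrix.smul_mul, Matrix.mul_smul,
            Matrix.one_mul, Matrix.mul_one]
          abel
        rw [h2]
        have h1 := hLax x lam s i j
        have heq : (fun u : ℝ => (matPolyEval (φ (u, x)).1 lam - μ • 1) i j)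
            = fun u : ℝ => matPolyEval (φ (u, x)).1 lam i j
              - (μ • (1 : Matrix (Fin n) (Fin n) ℂ)) i j := by
          funext u; simp [Matrix.sub_apply]
        rw [heq]
        exact h1.sub_const _
      have hd := hasDerivAt_det_path hentry
      rwa [sum_det_updateRow_comm] at hd
    have hconst := is_const_of_deriv_eq_zero
      (fun s => (hder s).differentiableAt) (fun s => (hder s).deriv) t 0
    simpa [hzero x] using hconst
  -- Continuity of the spectral invariants.
  have hFcont : ∀ lam μ : ℂ,
      Continuous fun x : S => (matPolyEval x.1 lam - μ • 1).det := by
    intro lam μ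
    have hc : Continuous fun x : S => matPolyEval x.1 lam - μ • 1 := by
      apply Continuous.sub _ continuous_const
      unfold matPolyEval
      exact continuous_finset_sum _ fun k _ =>
        ((continuous_apply k).comp continuous_subtype_val).fun_const_smul _
    exact hc.matrix_det
  have horb : ∀ x : S, Continuous fun t : ℝ => φ (t, x) :=
    fun x => hφ.comp (continuous_id.prodMk continuous_const)
  have hL₀O : L₀ ∈ interior U₀ := mem_interior_iff_mem_nhds.2 hU₀
  have hkey : ∀ x : S, x ∈ U₀ → (∀ lam μ : ℂ,
      (matPolyEval x.1 lam - μ • 1).det = (matPolyEval L₀.1 lam - μ • 1).det) → x = L₀ := by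
    intro x hx h
    have : x ∈ ({L₀} : Set S) := hU₀eq ▸ (⟨hx, h⟩ : x ∈ {x : S | x ∈ U₀ ∧ _})
    exact this
  -- Part 1: L₀ is a fixed point.
  have hfix : ∀ t : ℝ, φ (t, L₀) = L₀ := by
    have hTC : {t : ℝ | φ (t, L₀) ∈ interior U₀} = {t : ℝ | φ (t, L₀) = L₀} := by
      ext t
      constructor
      · intro ht
        exact hkey _ (interior_subset ht) (fun lam μ => hFinv L₀ t lam μ)
      · intro ht
        show φ (t, L₀) ∈ interior U₀
        rw [ht]; exact hL₀O
    have hopen : IsOpen {t : ℝ | φ (t, L₀) = L₀} :=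
      hTC ▸ isOpen_interior.preimage (horb L₀)
    have hclosed : IsClosed {t : ℝ | φ (t, L₀) = L₀} :=
      isClosed_singleton.preimage (horb L₀)
    rcases isClopen_iff.1 ⟨hclosed, hopen⟩ with h | h
    · exfalso
      have h0 : (0 : ℝ) ∈ {t : ℝ | φ (t, L₀) = L₀} := hzero L₀
      rw [h] at h0
      exact h0
    · intro t
      exact (Set.eq_univ_iff_forall.1 h) t
  refine ⟨hfix, ?_⟩
  -- Part 2: Lyapunov stability.
  intro U hU
  obtain ⟨K, hKn, hKsub, hKcomp⟩ := local_compact_nhds (Filter.inter_mem hU hU₀)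
  have hKU : K ⊆ U := fun x hx => (hKsub hx).1
  have hKU₀ : K ⊆ U₀ := fun x hx => (hKsub hx).2
  have hL₀W : L₀ ∈ interior K := mem_interior_iff_mem_nhds.2 hKn
  have hBcomp : IsCompact (K \ interior K) := hKcomp.diff isOpen_interior
  set Op : ℂ × ℂ → Set S := fun p =>
    (fun x : S => (matPolyEval x.1 p.1 - p.2 • 1).det) ⁻¹'
      {z | z ≠ (matPolyEval L₀.1 p.1 - p.2 • 1).det} with hOp
  have hcover : K \ interior K ⊆ ⋃ p : ℂ × ℂ, Op p := by
    intro y hy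
    by_contra hc
    have hall : ∀ lam μ : ℂ,
        (matPolyEval y.1 lam - μ • 1).det = (matPolyEval L₀.1 lam - μ • 1).det := by
      intro lam μ
      by_contra hne
      exact hc (Set.mem_iUnion.2 ⟨(lam, μ), hne⟩)
    have : y = L₀ := hkey y (hKU₀ hy.1) hall
    exact hy.2 (this ▸ hL₀W)
  obtain ⟨P, hP⟩ := hBcomp.elim_finite_subcover Op
    (fun p => IsOpen.preimage (hFcont p.1 p.2) isOpen_ne) hcover
  set g : S → (P → ℂ) := fun x p =>
    (matPolyEval x.1 (p : ℂ × ℂ).1 - (p : ℂ × ℂ).2 • 1).det with hg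
  have hgcont : Continuous g := continuous_pi fun p => hFcont _ _
  have hgimg : IsClosed (g '' (K \ interior K)) := (hBcomp.image hgcont).isClosed
  have hgL₀ : g L₀ ∉ g '' (K \ interior K) := by
    rintro ⟨y, hy, hgy⟩
    obtain ⟨p, hpP, hpy⟩ := Set.mem_iUnion₂.1 (hP hy)
    exact hpy (congrFun hgy ⟨p, hpP⟩)
  refine ⟨interior K ∩ g ⁻¹' (g '' (K \ interior K))ᶜ, ?_, ?_⟩
  · exact (isOpen_interior.inter (hgimg.isOpen_compl.preimage hgcont)).mem_nhds ⟨hL₀W, hgL₀⟩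
  · rintro x ⟨hxW, hxg⟩ t
    have hginv : ∀ s : ℝ, g (φ (s, x)) = g x :=
      fun s => funext fun p => hFinv x s _ _
    have hsub : {s : ℝ | φ (s, x) ∈ K} ⊆ {s : ℝ | φ (s, x) ∈ interior K} := by
      intro s hs
      by_contra hsW
      have hmem : g (φ (s, x)) ∈ g '' (K \ interior K) := ⟨_, ⟨hs, hsW⟩, rfl⟩
      rw [hginv s] at hmem
      exact hxg hmem
    have hTopen : IsOpen {s : ℝ | φ (s, x) ∈ interior K} :=
      isOpen_interior.preimage (horb x)
    have hTeq : {s : ℝ | φ (s, x) ∈ interior K} = {s : ℝ | φ (s, x) ∈ K} :=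
      Set.Subset.antisymm (fun s hs => show φ (s, x) ∈ K from interior_subset hs) hsub
    have hTclosed : IsClosed {s : ℝ | φ (s, x) ∈ interior K} := by
      rw [hTeq]
      exact hKcomp.isClosed.preimage (horb x)
    rcases isClopen_iff.1 ⟨hTclosed, hTopen⟩ with h | h
    · exfalso
      have h0 : (0 : ℝ) ∈ {s : ℝ | φ (s, x) ∈ interior K} := by
        show φ (0, x) ∈ interior K
        rw [hzero x]; exact hxW
      rw [h] at h0
      exact h0
    · have ht : t ∈ {s : ℝ | φ (s, x) ∈ interior K} := h ▸ Set.mem_univ t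
      exact hKU (interior_subset ht)
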